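/- Given a first countable regular Hausdorff space X of cardinality less than min(𝔟, 𝔰) and a countable closed discrete subset A ⊆ X, there is a first countable regular Hausdorff space Y = X ∪ {y} (one new point) containing X as an open dense-in-itself-extending subspace in which A has an accumulation point, and the subspace topology of Y on X equals the topology of X. -/

import Mathlib

noncomputable def boundingNumber : Cardinal :=
  sInf {c | ∃ B : Set (ℕ → ℕ), Cardinal.mk B = c ∧
    ∀ d : ℕ → ℕ, ∃ g ∈ B, {n | d n < g n}.Infinite}

noncomputable def splittingNumber : Cardinal :=
  sInf {c | ∃ S : Set (Set ℕ), Cardinal.mk S = c ∧ (∀ s ∈ S, s.Infinite) ∧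
    ∀ B : Set ℕ, B.Infinite → ∃ s ∈ S, (B ∩ s).Infinite ∧ (B \ s).Infinite}

open Set Filter Topology

set_option linter.unusedSectionVars false

lemma nested_basis {X : Type} [TopologicalSpace X] [FirstCountableTopology X]
    [RegularSpace X] (z : X) :
    ∃ U : ℕ → Set X, (∀ m, IsOpen (U m)) ∧ (∀ m, z ∈ U m) ∧
      (∀ m, closure (U (m+1)) ⊆ U m) ∧ (∀ N ∈ 𝓝 z, ∃ m, U m ⊆ N) := by
  obtain ⟨b, hb⟩ := (𝓝 z).exists_antitone_basis
  have step' : ∀ N ∈ 𝓝 z, ∃ V : Set X, IsOpen V ∧ z ∈ V ∧ closure V ⊆ N := by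
    intro N hN
    obtain ⟨C, hC, hCc, hCN⟩ := exists_mem_nhds_isClosed_subset hN
    exact ⟨interior C, isOpen_interior, mem_interior_iff_mem_nhds.2 hC,
      (closure_minimal interior_subset hCc).trans hCN⟩
  have step : ∀ (m : ℕ) (s : Set X), ∃ V : Set X, IsOpen V ∧ z ∈ V ∧
      (s ∈ 𝓝 z → closure V ⊆ s ∩ b m) := by
    intro m s
    by_cases hs : s ∈ 𝓝 z
    · obtain ⟨V, hVo, hVz, hVc⟩ := step' (s ∩ b m) (inter_mem hs (hb.mem m))
      exact ⟨V, hVo, hVz, fun _ => hVc⟩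
    · exact ⟨univ, isOpen_univ, trivial, fun h => absurd h hs⟩
  choose g hgo hgz hgc using step
  set U : ℕ → Set X := fun m => Nat.rec (g 0 univ) (fun m Um => g (m+1) Um) m with hU
  have hUnh : ∀ m, U m ∈ 𝓝 z := by
    intro m; cases m <;> exact (hgo _ _).mem_nhds (hgz _ _)
  have hUo : ∀ m, IsOpen (U m) := by intro m; cases m <;> exact hgo _ _
  have hUz : ∀ m, z ∈ U m := by intro m; cases m <;> exact hgz _ _
  have hUcl : ∀ m, closure (U (m+1)) ⊆ U m := by
    intro m
    exact (hgc (m+1) (U m) (hUnh m)).trans inter_subset_left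
  have hUb' : ∀ m, U m ⊆ b m := by
    intro m
    cases m with
    | zero => exact subset_closure.trans ((hgc 0 univ univ_mem).trans inter_subset_right)
    | succ m => exact subset_closure.trans ((hgc (m+1) (U m) (hUnh m)).trans inter_subset_right)
  refine ⟨U, hUo, hUz, hUcl, fun N hN => ?_⟩
  obtain ⟨m, -, hm⟩ := hb.toHasBasis.mem_iff.1 hN
  exact ⟨m, (hUb' m).trans hm⟩


section OPE

variable {X : Type} [TopologicalSpace X]
  (U : X → ℕ → Set X) (a : ℕ → X) (So : Set ℕ) (f : ℕ → ℕ)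

/-- The `X`-part of basic neighborhoods of the new point. -/
def Wset (k j : ℕ) : Set X := ⋃ n ∈ {n | n ∈ So ∧ k ≤ n}, U (a n) (f n + j)

/-- Basic neighborhoods of the new point. -/
def Vset (k j : ℕ) : Set (Option X) := insert none (some '' Wset U a So f k j)

lemma mem_Wset {x : X} {k j : ℕ} :
    x ∈ Wset U a So f k j ↔ ∃ n, (n ∈ So ∧ k ≤ n) ∧ x ∈ U (a n) (f n + j) := by
  simp [Wset]

lemma Wset_mono (hUa : ∀ z, Antitone (U z)) {k k' j j' : ℕ} (hk : k ≤ k') (hj : j ≤ j') :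
    Wset U a So f k' j' ⊆ Wset U a So f k j := by
  intro x hx
  obtain ⟨n, ⟨hn1, hn2⟩, hn3⟩ := (mem_Wset U a So f).1 hx
  exact (mem_Wset U a So f).2 ⟨n, ⟨hn1, hk.trans hn2⟩, hUa _ (by omega) hn3⟩

lemma Vset_mono (hUa : ∀ z, Antitone (U z)) {k k' j j' : ℕ} (hk : k ≤ k') (hj : j ≤ j') :
    Vset U a So f k' j' ⊆ Vset U a So f k j :=
  insert_subset_insert (image_mono (Wset_mono U a So f hUa hk hj))

/-- The topology on `Option X` extending that of `X`, with basic neighborhoods of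
`none` given by the `Vset`s. -/
def extTop (hUa : ∀ z, Antitone (U z)) : TopologicalSpace (Option X) where
  IsOpen O := IsOpen (some ⁻¹' O) ∧ (none ∈ O → ∃ k j, Vset U a So f k j ⊆ O)
  isOpen_univ := ⟨isOpen_univ, fun _ => ⟨0, 0, subset_univ _⟩⟩
  isOpen_inter := by
    rintro O₁ O₂ ⟨h1, h1'⟩ ⟨h2, h2'⟩
    refine ⟨h1.inter h2, fun hn => ?_⟩
    obtain ⟨k, j, hkj⟩ := h1' hn.1
    obtain ⟨k', j', hkj'⟩ := h2' hn.2
    exact ⟨max k k', max j j',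
      subset_inter ((Vset_mono U a So f hUa (le_max_left _ _) (le_max_left _ _)).trans hkj)
        ((Vset_mono U a So f hUa (le_max_right _ _) (le_max_right _ _)).trans hkj')⟩
  isOpen_sUnion := by
    intro S hS
    constructor
    · rw [preimage_sUnion]
      exact isOpen_biUnion fun O hO => (hS O hO).1
    · rintro ⟨O, hO, hnO⟩
      obtain ⟨k, j, hkj⟩ := (hS O hO).2 hnO
      exact ⟨k, j, hkj.trans (subset_sUnion_of_mem hO)⟩

variable [FirstCountableTopology X] [RegularSpace X] [T2Space X]

theorem onePoint_ext
    (A : Set X) (ha : ∀ n, a n ∈ A)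
    (hSo : So.Infinite)
    (hUo : ∀ z m, IsOpen (U z m)) (hUz : ∀ z m, z ∈ U z m)
    (hUcl : ∀ z m, closure (U z (m + 1)) ⊆ U z m)
    (hUb : ∀ z : X, ∀ N ∈ 𝓝 z, ∃ m, U z m ⊆ N)
    (key : ∀ x : X, ∃ m K, ∀ n ∈ So, K ≤ n → U (a n) (f n) ∩ U x m = ∅) :
    ∃ (Y : Type) (tY : TopologicalSpace Y),
      @FirstCountableTopology Y tY ∧ @RegularSpace Y tY ∧ @T2Space Y tY ∧
      ∃ e : X → Y,
        @Topology.IsEmbedding _ _ _ tY e ∧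
        @IsOpen Y tY (Set.range e) ∧
        @Dense Y tY (Set.range e) ∧
        (∃ y : Y, (Set.range e)ᶜ = {y}) ∧
        ∃ y : Y, @AccPt Y tY y (Filter.principal (e '' A)) := by
  have hUa : ∀ z, Antitone (U z) := by
    intro z
    refine antitone_nat_of_succ_le fun m => ?_
    exact subset_closure.trans (hUcl z m)
  letI T : TopologicalSpace (Option X) := extTop U a So f hUa
  have hisOpen : ∀ O : Set (Option X),
      IsOpen O ↔ IsOpen (some ⁻¹' O) ∧ (none ∈ O → ∃ k j, Vset U a So f k j ⊆ O) :=
    fun O => Iff.rfl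
  -- images of open sets are open
  have hopenX : ∀ s : Set X, IsOpen s → IsOpen (some '' s) := by
    intro s hs
    rw [hisOpen]
    constructor
    · rw [preimage_image_eq s (Option.some_injective X)]; exact hs
    · intro h; exact absurd h (by simp)
  have hVopen : ∀ k j, IsOpen (Vset U a So f k j) := by
    intro k j
    rw [hisOpen]
    constructor
    · have : some ⁻¹' (Vset U a So f k j) = Wset U a So f k j := by
        ext x; simp [Vset]
      rw [this]
      exact isOpen_biUnion fun n _ => hUo _ _
    · exact fun _ => ⟨k, j, subset_rfl⟩
  have hnone_mem : ∀ k j, (none : Option X) ∈ Vset U a So f k j := fun k j => mem_insert _ _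
  have hsome_memV : ∀ {w k j}, w ∈ Wset U a So f k j → (some w) ∈ Vset U a So f k j :=
    fun hw => mem_insert_of_mem _ (mem_image_of_mem _ hw)
  have hnone_nhds : ∀ N : Set (Option X), N ∈ 𝓝 none ↔ ∃ k j, Vset U a So f k j ⊆ N := by
    intro N
    constructor
    · intro hN
      obtain ⟨O, hON, hOo, hOn⟩ := mem_nhds_iff.1 hN
      obtain ⟨k, j, hkj⟩ := ((hisOpen O).1 hOo).2 hOn
      exact ⟨k, j, hkj.trans hON⟩
    · rintro ⟨k, j, h⟩
      exact mem_of_superset ((hVopen k j).mem_nhds (hnone_mem k j)) h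
  have hsome_nhds : ∀ (x : X) (N : Set (Option X)),
      N ∈ 𝓝 (some x) ↔ ∃ m, some '' U x m ⊆ N := by
    intro x N
    constructor
    · intro hN
      obtain ⟨O, hON, hOo, hOx⟩ := mem_nhds_iff.1 hN
      have : some ⁻¹' O ∈ 𝓝 x := (((hisOpen O).1 hOo).1).mem_nhds hOx
      obtain ⟨m, hm⟩ := hUb x _ this
      exact ⟨m, ((image_mono hm).trans (image_preimage_subset _ _)).trans hON⟩
    · rintro ⟨m, hm⟩
      exact mem_of_superset ((hopenX _ (hUo x m)).mem_nhds ⟨x, hUz x m, rfl⟩) hm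
  -- upgraded key
  have keyW : ∀ x : X, ∃ m K, ∀ j, Wset U a So f K j ∩ U x m = ∅ := by
    intro x
    obtain ⟨m, K, hk⟩ := key x
    refine ⟨m, K, fun j => eq_empty_iff_forall_notMem.2 ?_⟩
    rintro w ⟨hw1, hw2⟩
    obtain ⟨n, ⟨hn1, hn2⟩, hn3⟩ := (mem_Wset U a So f).1 hw1
    have hmem : w ∈ U (a n) (f n) ∩ U x m := ⟨hUa _ (Nat.le_add_right _ _) hn3, hw2⟩
    rw [hk n hn1 hn2] at hmem
    exact hmem
  -- T2
  have hT2 : T2Space (Option X) := by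
    refine ⟨fun y z hne => ?_⟩
    match y, z with
    | some x, some x' =>
      obtain ⟨u, v, hu, hv, hxu, hx'v, huv⟩ := t2_separation
        (fun h => hne (congrArg some h))
      exact ⟨some '' u, some '' v, hopenX _ hu, hopenX _ hv, mem_image_of_mem _ hxu,
        mem_image_of_mem _ hx'v,
        (disjoint_image_iff (Option.some_injective X)).2 huv⟩
    | none, some x =>
      obtain ⟨m, K, hK⟩ := keyW x
      refine ⟨Vset U a So f K 0, some '' U x m, hVopen _ _, hopenX _ (hUo x m),
        hnone_mem _ _, mem_image_of_mem _ (hUz x m), ?_⟩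
      rw [disjoint_left]
      rintro y' hy' ⟨w, hw, rfl⟩
      rcases hy' with h | h
      · exact absurd h.symm (by simp)
      · obtain ⟨w', hw', hww⟩ := h
        rw [Option.some_inj] at hww; subst hww
        have hmem : w' ∈ Wset U a So f K 0 ∩ U x m := ⟨hw', hw⟩
        rw [hK 0] at hmem
        exact hmem
    | some x, none =>
      obtain ⟨m, K, hK⟩ := keyW x
      refine ⟨some '' U x m, Vset U a So f K 0, hopenX _ (hUo x m), hVopen _ _,
        mem_image_of_mem _ (hUz x m), hnone_mem _ _, ?_⟩
      rw [disjoint_right]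
      rintro y' hy' ⟨w, hw, rfl⟩
      rcases hy' with h | h
      · exact absurd h.symm (by simp)
      · obtain ⟨w', hw', hww⟩ := h
        rw [Option.some_inj] at hww; subst hww
        have hmem : w' ∈ Wset U a So f K 0 ∩ U x m := ⟨hw', hw⟩
        rw [hK 0] at hmem
        exact hmem
    | none, none => exact absurd rfl hne
  -- first countable
  have hFC : FirstCountableTopology (Option X) := by
    refine ⟨fun y => ?_⟩
    match y with
    | some x =>
      have hb : (𝓝 (some x)).HasBasis (fun _ : ℕ => True) (fun m => some '' U x m) :=
        ⟨fun N => by simpa using hsome_nhds x N⟩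
      exact hb.isCountablyGenerated
    | none =>
      have hb : (𝓝 (none : Option X)).HasBasis (fun _ : ℕ × ℕ => True)
          (fun p => Vset U a So f p.1 p.2) := by
        refine ⟨fun N => ?_⟩
        rw [hnone_nhds]
        constructor
        · rintro ⟨k, j, h⟩; exact ⟨(k, j), trivial, h⟩
        · rintro ⟨p, -, h⟩; exact ⟨p.1, p.2, h⟩
      exact hb.isCountablyGenerated
  -- regular
  have hReg : RegularSpace (Option X) := by
    apply RegularSpace.of_exists_mem_nhds_isClosed_subset
    intro y N hN
    match y with
    | some x =>
      obtain ⟨m₀, hm₀⟩ := (hsome_nhds x N).1 hN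
      obtain ⟨mx, K, hK⟩ := keyW x
      set m := max m₀ mx with hm
      refine ⟨some '' closure (U x (m + 1)), ?_, ?_, ?_⟩
      · exact (hsome_nhds x _).2 ⟨m + 1, image_mono subset_closure⟩
      · rw [← isOpen_compl_iff, hisOpen]
        constructor
        · have : some ⁻¹' (some '' closure (U x (m + 1)))ᶜ = (closure (U x (m + 1)))ᶜ := by
            ext w; simp [Option.some_injective X, ((Option.some_injective X).mem_set_image)]
          rw [this]
          exact isClosed_closure.isOpen_compl
        · intro _
          refine ⟨K, 0, ?_⟩
          rintro y' hy'
          rcases hy' with h | h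
          · subst h; simp
          · obtain ⟨w, hw, rfl⟩ := h
            simp only [mem_compl_iff]
            rintro ⟨w', hw', hww⟩
            rw [Option.some_inj] at hww; subst hww
            have hwm : w' ∈ U x mx := hUa _ (le_max_right m₀ mx) ((hUcl x m) hw')
            have hmem : w' ∈ Wset U a So f K 0 ∩ U x mx := ⟨hw, hwm⟩
            rw [hK 0] at hmem
            exact hmem
      · refine subset_trans ?_ hm₀
        refine image_mono ?_
        exact (hUcl x m).trans (hUa _ (le_max_left m₀ mx))
    | none =>
      obtain ⟨k, j, hkj⟩ := (hnone_nhds N).1 hN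
      refine ⟨closure (Vset U a So f k (j + 1)), ?_, isClosed_closure, ?_⟩
      · exact mem_of_superset ((hVopen k (j + 1)).mem_nhds (hnone_mem _ _)) subset_closure
      · refine subset_trans ?_ hkj
        intro y hy
        match y with
        | none => exact hnone_mem k j
        | some x =>
          refine hsome_memV ?_
          by_contra hx
          obtain ⟨mx, K, hK⟩ := keyW x
          set Fn : Set ℕ := {n | n ∈ So ∧ k ≤ n ∧ n < K} with hFn
          have hFnfin : Fn.Finite := (finite_Iio K).subset fun n hn => hn.2.2
          set O : Set X := U x mx \ ⋃ n ∈ Fn, closure (U (a n) (f n + (j + 1))) with hO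
          have hOopen : IsOpen O :=
            (hUo x mx).sdiff (hFnfin.isClosed_biUnion fun n _ => isClosed_closure)
          have hxO : x ∈ O := by
            refine ⟨hUz x mx, ?_⟩
            simp only [mem_iUnion, not_exists]
            intro n hn hxn
            have : x ∈ U (a n) (f n + j) := hUcl (a n) (f n + j) hxn
            exact hx ((mem_Wset U a So f).2 ⟨n, ⟨hn.1, hn.2.1⟩, this⟩)
          obtain ⟨z, hzO, hzV⟩ := mem_closure_iff.1 hy (some '' O) (hopenX _ hOopen)
            (mem_image_of_mem _ hxO)
          obtain ⟨w, hwO, rfl⟩ := hzO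
          rcases hzV with h | h
          · exact absurd h (by simp)
          · obtain ⟨w', hw', hww⟩ := h
            rw [Option.some_inj] at hww; subst hww
            obtain ⟨n, ⟨hn1, hn2⟩, hn3⟩ := (mem_Wset U a So f).1 hw'
            by_cases hnK : n < K
            · refine hwO.2 ?_
              exact mem_biUnion (show n ∈ Fn from ⟨hn1, hn2, hnK⟩) (subset_closure hn3)
            · have hmem : w' ∈ Wset U a So f K (j + 1) ∩ U x mx :=
                ⟨(mem_Wset U a So f).2 ⟨n, ⟨hn1, le_of_not_gt hnK⟩, hn3⟩, hwO.1⟩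
              rw [hK (j + 1)] at hmem
              exact hmem
  -- assemble
  refine ⟨Option X, T, hFC, hReg, hT2, some, ?_, ?_, ?_, ?_, ?_⟩
  · refine ⟨⟨?_⟩, Option.some_injective X⟩
    refine TopologicalSpace.ext_iff.2 fun s => ?_
    rw [isOpen_induced_iff]
    constructor
    · intro h
      exact ⟨some '' s, hopenX s h, preimage_image_eq s (Option.some_injective X)⟩
    · rintro ⟨O, hO, rfl⟩
      exact ((hisOpen O).1 hO).1
  · rw [← image_univ]
    exact hopenX univ isOpen_univ
  · intro y
    rw [mem_closure_iff]
    intro O hOo hyO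
    match y with
    | some x => exact ⟨some x, hyO, mem_range_self x⟩
    | none =>
      obtain ⟨k, j, hkj⟩ := ((hisOpen O).1 hOo).2 hyO
      obtain ⟨n, hnSo, hkn⟩ := hSo.exists_gt k
      exact ⟨some (a n), hkj (hsome_memV ((mem_Wset U a So f).2
        ⟨n, ⟨hnSo, hkn.le⟩, hUz _ _⟩)), mem_range_self _⟩
  · exact ⟨none, Set.compl_range_some X⟩
  · refine ⟨none, accPt_iff_nhds.2 fun N hN => ?_⟩
    obtain ⟨k, j, hkj⟩ := (hnone_nhds N).1 hN
    obtain ⟨n, hnSo, hkn⟩ := hSo.exists_gt k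
    refine ⟨some (a n), ⟨hkj (hsome_memV ((mem_Wset U a So f).2
      ⟨n, ⟨hnSo, hkn.le⟩, hUz _ _⟩)), mem_image_of_mem _ (ha n)⟩, by simp⟩

end OPE

/-- Given a first countable regular Hausdorff space `X` with `|X| < min(𝔟,𝔰)` and a
countably infinite closed discrete `A ⊆ X`, there is a first countable regular
Hausdorff space `Y` obtained by adding one new point, containing `X` as an open
dense subspace (with its original topology as subspace topology), in which `A`
has an accumulation point. -/
theorem stmt11 (X : Type) [TopologicalSpace X] [FirstCountableTopology X]
    [RegularSpace X] [T2Space X]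
    (hcard : Cardinal.mk X < min boundingNumber splittingNumber)
    (A : Set X) (hAc : A.Countable) (hAi : A.Infinite)
    (hAcl : IsClosed A) (hAdisc : DiscreteTopology ↥A) :
    ∃ (Y : Type) (tY : TopologicalSpace Y),
      @FirstCountableTopology Y tY ∧ @RegularSpace Y tY ∧ @T2Space Y tY ∧
      ∃ e : X → Y,
        @Topology.IsEmbedding _ _ _ tY e ∧
        @IsOpen Y tY (Set.range e) ∧
        @Dense Y tY (Set.range e) ∧
        (∃ y : Y, (Set.range e)ᶜ = {y}) ∧
        ∃ y : Y, @AccPt Y tY y (Filter.principal (e '' A)) := by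
  classical
  -- nested bases
  choose U hUo hUz hUcl hUb using fun z : X => nested_basis z
  have hUanti : ∀ z : X, Antitone (U z) := fun z =>
    antitone_nat_of_succ_le fun m => subset_closure.trans (hUcl z m)
  have hXinf : Infinite X := by
    have := hAi.to_subtype
    exact Infinite.of_injective (Subtype.val : A → X) Subtype.val_injective
  obtain ⟨emb⟩ : Nonempty (ℕ ↪ ↥A) := ⟨hAi.natEmbedding⟩
  set a : ℕ → X := fun n => (emb n : X) with haa
  have ha : ∀ n, a n ∈ A := fun n => (emb n).2
  have hainj : Function.Injective a :=
    Subtype.val_injective.comp emb.injective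
  have hbX : Cardinal.mk X < boundingNumber := hcard.trans_le (min_le_left _ _)
  have hsX : Cardinal.mk X < splittingNumber := hcard.trans_le (min_le_right _ _)
  have hℵ : Cardinal.aleph0 ≤ Cardinal.mk X := Cardinal.aleph0_le_mk X
  -- splitting step
  set sfun : X → ℕ → Set ℕ := fun x m => {n | a n ∈ closure (U x m)} with hsfun
  set 𝒮 : Set (Set ℕ) := {t | (∃ x m, t = sfun x m) ∧ t.Infinite} with h𝒮
  have hmk𝒮 : Cardinal.mk ↥𝒮 ≤ Cardinal.mk X := by
    have hsub : 𝒮 ⊆ Set.range (fun p : X × ℕ => sfun p.1 p.2) := by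
      rintro t ⟨⟨x, m, rfl⟩, -⟩; exact ⟨(x, m), rfl⟩
    refine (Cardinal.mk_le_mk_of_subset hsub).trans ?_
    refine Cardinal.mk_range_le.trans ?_
    have : Cardinal.mk (X × ℕ) = Cardinal.mk X := by
      rw [Cardinal.mk_prod, Cardinal.lift_id, Cardinal.lift_id, Cardinal.mk_nat,
        Cardinal.mul_eq_max hℵ le_rfl]
      exact max_eq_left hℵ
    exact this.le
  have hnspl : ∃ B : Set ℕ, B.Infinite ∧
      ∀ t ∈ 𝒮, ¬((B ∩ t).Infinite ∧ (B \ t).Infinite) := by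
    by_contra hcon
    push_neg at hcon
    have hmem : Cardinal.mk ↥𝒮 ∈ {c | ∃ S : Set (Set ℕ), Cardinal.mk S = c ∧
        (∀ s ∈ S, s.Infinite) ∧
        ∀ B : Set ℕ, B.Infinite → ∃ s ∈ S, (B ∩ s).Infinite ∧ (B \ s).Infinite} :=
      ⟨𝒮, rfl, fun t ht => ht.2, hcon⟩
    have h1 : splittingNumber ≤ Cardinal.mk ↥𝒮 := csInf_le (OrderBot.bddBelow _) hmem
    exact absurd (hmk𝒮.trans_lt hsX) (not_lt.2 h1)
  obtain ⟨B, hBinf, hB2⟩ := hnspl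
  -- per point: some level has finite trace
  have hSfin : ∀ x : X, ∃ m, (B ∩ sfun x m).Finite := by
    intro x
    by_contra hcon
    push_neg at hcon
    have hcon' : ∀ m, (B ∩ sfun x m).Infinite := hcon
    have hnear : ∀ m, (U x m ∩ (A \ {x})).Nonempty := by
      intro m
      obtain ⟨n, hn, hax⟩ : ∃ n ∈ B ∩ sfun x (m+1), a n ≠ x := by
        by_contra hcc
        push_neg at hcc
        have hss : B ∩ sfun x (m+1) ⊆ {n | a n = x} := hcc
        have hsing : ({n | a n = x} : Set ℕ).Subsingleton := by
          intro p hp q hq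
          exact hainj (hp.trans hq.symm)
        exact hcon' (m+1) (hsing.finite.subset hss)
      refine ⟨a n, hUcl x m hn.2, ha n, by simpa using hax⟩
    have hxcl : x ∈ closure (A \ {x}) := by
      rw [mem_closure_iff_nhds]
      intro N hN
      obtain ⟨m, hm⟩ := hUb x N hN
      obtain ⟨w, hw1, hw2⟩ := hnear m
      exact ⟨w, hm hw1, hw2⟩
    have hxA : x ∈ A := by
      have := (closure_mono (diff_subset : A \ {x} ⊆ A)) hxcl
      rwa [hAcl.closure_eq] at this
    obtain ⟨O, hOo, hOx⟩ : ∃ O : Set X, IsOpen O ∧ O ∩ A = {x} := by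
      have hop : IsOpen ({⟨x, hxA⟩} : Set ↥A) := isOpen_discrete _
      rw [isOpen_induced_iff] at hop
      obtain ⟨O, hOo, hOe⟩ := hop
      refine ⟨O, hOo, ?_⟩
      ext w
      constructor
      · rintro ⟨hwO, hwA⟩
        have hw : (⟨w, hwA⟩ : ↥A) ∈ Subtype.val ⁻¹' O := hwO
        rw [hOe] at hw
        exact congrArg Subtype.val hw
      · intro hw
        have hweq : w = x := hw
        have hx : (⟨x, hxA⟩ : ↥A) ∈ Subtype.val ⁻¹' O := by rw [hOe]; rfl
        rw [hweq]
        exact ⟨hx, hxA⟩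
    have hOnx : O ∈ 𝓝 x := hOo.mem_nhds (by
      have : x ∈ O ∩ A := hOx ▸ rfl
      exact this.1)
    obtain ⟨m, hm⟩ := hUb x O hOnx
    obtain ⟨w, hw1, hw2, hw3⟩ := hnear m
    have : w ∈ O ∩ A := ⟨hm hw1, hw2⟩
    rw [hOx] at this
    exact hw3 this
  choose mB hmB using hSfin
  -- bounding step
  have hφex : ∀ (x : X) (n : ℕ), ∃ l,
      a n ∉ closure (U x (mB x)) → U (a n) l ∩ U x (mB x) = ∅ := by
    intro x n
    by_cases hc : a n ∈ closure (U x (mB x))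
    · exact ⟨0, fun h => absurd hc h⟩
    · obtain ⟨l, hl⟩ := hUb (a n) _ (isClosed_closure.isOpen_compl.mem_nhds hc)
      refine ⟨l, fun _ => eq_empty_iff_forall_notMem.2 ?_⟩
      rintro w ⟨hw1, hw2⟩
      exact hl hw1 (subset_closure hw2)
  choose φ hφ using hφex
  have hbd : ∃ d : ℕ → ℕ, ∀ x : X, {n | d n < φ x n}.Finite := by
    by_contra hcon
    push_neg at hcon
    have hmem : Cardinal.mk ↥(Set.range φ) ∈ {c | ∃ Bf : Set (ℕ → ℕ),
        Cardinal.mk Bf = c ∧ ∀ d : ℕ → ℕ, ∃ g ∈ Bf, {n | d n < g n}.Infinite} := by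
      refine ⟨Set.range φ, rfl, fun d => ?_⟩
      obtain ⟨x, hx⟩ := hcon d
      exact ⟨φ x, mem_range_self x, hx⟩
    have h1 : boundingNumber ≤ Cardinal.mk ↥(Set.range φ) :=
      csInf_le (OrderBot.bddBelow _) hmem
    exact absurd (Cardinal.mk_range_le.trans_lt hbX) (not_lt.2 h1)
  obtain ⟨f, hf⟩ := hbd
  -- the key property
  have key : ∀ x : X, ∃ m K, ∀ n ∈ B, K ≤ n → U (a n) (f n) ∩ U x m = ∅ := by
    intro x
    have hfin : ((B ∩ sfun x (mB x)) ∪ {n | f n < φ x n}).Finite := (hmB x).union (hf x)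
    obtain ⟨K0, hK0⟩ := hfin.bddAbove
    refine ⟨mB x, K0 + 1, fun n hn hKn => ?_⟩
    have hnot : n ∉ (B ∩ sfun x (mB x)) ∪ {n | f n < φ x n} := fun h => by
      have := hK0 h; omega
    have hns : a n ∉ closure (U x (mB x)) := fun hcl => hnot (Or.inl ⟨hn, hcl⟩)
    have hfn : φ x n ≤ f n := le_of_not_gt fun h => hnot (Or.inr h)
    apply eq_empty_iff_forall_notMem.2
    rintro w ⟨hw1, hw2⟩
    have hmem : w ∈ U (a n) (φ x n) ∩ U x (mB x) := ⟨hUanti (a n) hfn hw1, hw2⟩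
    rw [hφ x n hns] at hmem
    exact hmem
  exact onePoint_ext U a B f A ha hBinf hUo hUz hUcl hUb key
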